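/- arXiv:0804.1082 — 2 statements merged into one kernel-verified Lean document; each statement's English description precedes it below -/
import Mathlib

section
/- For a simplicial group G, the assignment W̄_n G = ∏_{j=n−1}^{0} G_j with (g_{n−1},…,g_0) W̄_θ = (∏_{j=(i+1)θ−1}^{iθ} g_j G_{θ|_{[i]}^{[j]}})_{i=m−1,…,0} for monotone θ : [m] → [n] defines a simplicial set (the Kan classifying simplicial set W̄G), i.e., W̄_{id} = id and W̄_θ W̄_ψ = W̄_{ψθ}. -/
namespace Paper

/-- clamped coface map `δ^k : [a] → [b]`. -/
def δOH (k a b : ℕ) : Fin (a+1) →o Fin (b+1) where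
  toFun i := ⟨min (if (i:ℕ) < k then (i:ℕ) else (i:ℕ)+1) b, Nat.lt_succ_of_le (Nat.min_le_right _ _)⟩
  monotone' := by
    intro i j hij
    have h : (i:ℕ) ≤ (j:ℕ) := hij
    simp only [Fin.mk_le_mk]
    split_ifs <;> omega

/-- clamped codegeneracy map `σ^k : [a] → [b]`. -/
def σOH (k a b : ℕ) : Fin (a+1) →o Fin (b+1) where
  toFun i := ⟨min (if (i:ℕ) ≤ k then (i:ℕ) else (i:ℕ)-1) b, Nat.lt_succ_of_le (Nat.min_le_right _ _)⟩
  monotone' := by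
    intro i j hij
    have h : (i:ℕ) ≤ (j:ℕ) := hij
    simp only [Fin.mk_le_mk]
    split_ifs <;> omega

/-- `τ^k : [n] → [1]`, sending `[0, n-k]` to `0` and the rest to `1`. -/
def τOH (n k : ℕ) : Fin (n+1) →o Fin 2 where
  toFun i := if (i:ℕ) + k ≤ n then 0 else 1
  monotone' := by
    intro i j hij
    have h : (i:ℕ) ≤ (j:ℕ) := hij
    dsimp only
    split_ifs with h1 h2 h3
    · exact le_refl _
    · exact Fin.zero_le _
    · exact absurd h3 (by omega)
    · exact le_refl _

/-- application of `θ : [m] → [n]` to a natural number (clamped). -/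
def fApp {m n : ℕ} (θ : Fin (m+1) →o Fin (n+1)) (x : ℕ) : ℕ :=
  (θ ⟨min x m, Nat.lt_succ_of_le (Nat.min_le_right _ _)⟩ : Fin (n+1))

theorem fApp_mono {m n : ℕ} (θ : Fin (m+1) →o Fin (n+1)) {x y : ℕ} (h : x ≤ y) :
    fApp θ x ≤ fApp θ y :=
  Fin.le_def.mp (θ.monotone (Fin.mk_le_mk.mpr (by omega)))

theorem fApp_le {m n : ℕ} (θ : Fin (m+1) →o Fin (n+1)) (x : ℕ) : fApp θ x ≤ n :=
  Nat.lt_succ_iff.mp (Fin.isLt _)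

theorem fApp_coe {m n : ℕ} (θ : Fin (m+1) →o Fin (n+1)) (p : Fin (m+1)) :
    fApp θ (p:ℕ) = (θ p : ℕ) := by
  have hp : (⟨min (p:ℕ) m, Nat.lt_succ_of_le (Nat.min_le_right _ _)⟩ : Fin (m+1)) = p :=
    Fin.ext (show min (p:ℕ) m = (p:ℕ) from by have := p.isLt; omega)
  unfold fApp
  rw [hp]

/-- `Spl_{≤ p}(θ) : [p] → [pθ]`. -/
def splLe {m n : ℕ} (θ : Fin (m+1) →o Fin (n+1)) (p : Fin (m+1)) :
    Fin ((p:ℕ)+1) →o Fin ((θ p : ℕ)+1) where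
  toFun i := ⟨fApp θ (i:ℕ), by
    have h1 : fApp θ (i:ℕ) ≤ fApp θ (p:ℕ) := fApp_mono θ (by have := i.isLt; omega)
    have h2 : fApp θ (p:ℕ) = (θ p : ℕ) := fApp_coe θ p
    omega⟩
  monotone' := by
    intro a b hab
    have h : (a:ℕ) ≤ (b:ℕ) := hab
    simp only [Fin.mk_le_mk]
    exact fApp_mono θ h

/-- `Spl_{≥ p}(θ) : [m-p] → [n-pθ]`. -/
def splGe {m n : ℕ} (θ : Fin (m+1) →o Fin (n+1)) (p : Fin (m+1)) :
    Fin (m - (p:ℕ) + 1) →o Fin (n - (θ p : ℕ) + 1) where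
  toFun i := ⟨fApp θ ((i:ℕ) + (p:ℕ)) - (θ p : ℕ), by
    have h1 : fApp θ ((i:ℕ) + (p:ℕ)) ≤ n := fApp_le θ _
    omega⟩
  monotone' := by
    intro a b hab
    have h : (a:ℕ) ≤ (b:ℕ) := hab
    simp only [Fin.mk_le_mk]
    have := fApp_mono θ (show (a:ℕ) + (p:ℕ) ≤ (b:ℕ) + (p:ℕ) by omega)
    omega

/-- the restriction `θ|_[i]^[j] : [i] → [j]` of `θ` (clamped). -/
def restrictOH {m n : ℕ} (θ : Fin (m+1) →o Fin (n+1)) (i j : ℕ) : Fin (i+1) →o Fin (j+1) where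
  toFun k := ⟨min (fApp θ (k:ℕ)) j, Nat.lt_succ_of_le (Nat.min_le_right _ _)⟩
  monotone' := by
    intro a b hab
    have h : (a:ℕ) ≤ (b:ℕ) := hab
    simp only [Fin.mk_le_mk]
    have := fApp_mono θ h
    omega

/-- ascending product `f a * f (a+1) * ⋯ * f (b-1)`. -/
def aProd {γ : Type*} [Monoid γ] (f : ℕ → γ) (a : ℕ) : ℕ → γ
  | 0 => 1
  | b+1 => if a ≤ b then aProd f a b * f b else 1

/-- descending product `f (b-1) * f (b-2) * ⋯ * f a`. -/
def dProd {γ : Type*} [Monoid γ] (f : ℕ → γ) (a : ℕ) : ℕ → γ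
  | 0 => 1
  | b+1 => if a ≤ b then f b * dProd f a b else 1

end Paper
namespace Paper

/-- A simplicial group, given by levels, structure maps, functoriality,
and levelwise multiplicativity. -/
structure SGrp where
  obj : ℕ → Type
  grp : ∀ n, Group (obj n)
  map : ∀ {m n : ℕ}, (Fin (m+1) →o Fin (n+1)) → obj n → obj m
  map_id : ∀ {n : ℕ} (x : obj n), map OrderHom.id x = x
  map_comp : ∀ {l m n : ℕ} (α : Fin (l+1) →o Fin (m+1)) (β : Fin (m+1) →o Fin (n+1)) (x : obj n),
    map α (map β x) = map (β.comp α) x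
  map_mul : ∀ {m n : ℕ} (θ : Fin (m+1) →o Fin (n+1)) (x y : obj n),
    map θ (x * y) = map θ x * map θ y

attribute [instance] SGrp.grp

namespace SGrp

/-- face `d_k : G_N → G_{N-1}` -/
def face (G : SGrp) (k : ℕ) {N : ℕ} : G.obj N → G.obj (N-1) := G.map (δOH k (N-1) N)

/-- degeneracy `s_k : G_M → G_{M+1}` -/
def deg (G : SGrp) (k : ℕ) {M : ℕ} : G.obj M → G.obj (M+1) := G.map (σOH k (M+1) M)

/-- transport between levels (junk value `1` when levels differ). -/
def gcast (G : SGrp) {a : ℕ} (b : ℕ) (x : G.obj a) : G.obj b := if h : a = b then h ▸ x else 1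

/-- descending composite of faces `d_{i+c} d_{i+c-1} ⋯ d_{i+1}`. -/
def dcomp (G : SGrp) : (i c : ℕ) → {N : ℕ} → G.obj N → G.obj (N - c)
  | _, 0, _, x => x
  | i, c+1, _, x => G.face (i+1) (G.dcomp (i+1) c x)

/-- ascending composite of degeneracies `s_i s_{i+1} ⋯ s_{i+c-1}`. -/
def scomp (G : SGrp) : (i c : ℕ) → {M : ℕ} → G.obj M → G.obj (M + c)
  | _, 0, _, x => x
  | i, c+1, _, x => G.deg (i+c) (G.scomp i c x)

/-- `x ↦ x d_j ⋯ d_{i+1} s_i ⋯ s_{j-1}`, an endomap of `G_N`. -/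
def ds (G : SGrp) (i j : ℕ) {N : ℕ} (x : G.obj N) : G.obj N :=
  G.gcast N (G.scomp i (min (j - i) N) (G.dcomp i (min (j - i) N) x))

/-- `x ↦ x d_j ⋯ d_{i+1} s_i ⋯ s_{n-1} : G_j → G_n`. -/
def dsTo (G : SGrp) (i n : ℕ) {j : ℕ} (x : G.obj j) : G.obj n :=
  G.gcast n (G.scomp i (n - i) (G.gcast i (G.dcomp i (j - i) x)))

/-- the `y_i` of the section `S_G`, defined by descending recursion (with fuel). -/
def yAux (G : SGrp) (n : ℕ) (g : ∀ j : ℕ, G.obj j) : ℕ → ℕ → G.obj n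
  | 0, _ => 1
  | fuel+1, i =>
      aProd (fun j => G.ds i j (G.yAux n g fuel j)⁻¹) (i+1) n *
      dProd (fun j => G.dsTo i n (g j)) i n

/-- `W̄_n G = ∏_{j = n-1}^{0} G_j`. -/
def WbarN (G : SGrp) (n : ℕ) : Type := ∀ j : Fin n, G.obj (j:ℕ)

/-- extension of a tuple in `W̄_n G` by `1`. -/
def gE (G : SGrp) {n : ℕ} (g : G.WbarN n) : ∀ j : ℕ, G.obj j :=
  fun j => if h : j < n then g ⟨j, h⟩ else 1

/-- the coretraction `(S_G)_n : W̄_n G → Diag_n NG = (G_n)^n`. -/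
def SGn (G : SGrp) (n : ℕ) (g : G.WbarN n) : Fin n → G.obj n :=
  fun i => G.yAux n (G.gE g) n (i:ℕ)

/-- extension of a tuple in `(G_n)^n` by `1`. -/
def xE (G : SGrp) {n : ℕ} (x : Fin n → G.obj n) : ℕ → G.obj n :=
  fun j => if h : j < n then x ⟨j, h⟩ else 1

/-- the structure map `W̄_θ : W̄_n G → W̄_m G` of the Kan classifying simplicial set. -/
def wbarMap (G : SGrp) {m n : ℕ} (θ : Fin (m+1) →o Fin (n+1)) (g : G.WbarN n) : G.WbarN m :=
  fun i => dProd (fun j => G.map (restrictOH θ (i:ℕ) j) (G.gE g j))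
    ((θ i.castSucc : Fin (n+1)) : ℕ) ((θ i.succ : Fin (n+1)) : ℕ)

/-- the structure map `(Diag NG)_θ : (G_n)^n → (G_m)^m` of the diagonal of the nerve. -/
def diagMap (G : SGrp) {m n : ℕ} (θ : Fin (m+1) →o Fin (n+1)) (x : Fin n → G.obj n) :
    Fin m → G.obj m :=
  fun i => dProd (fun j => G.map θ (G.xE x j))
    ((θ i.castSucc : Fin (n+1)) : ℕ) ((θ i.succ : Fin (n+1)) : ℕ)

/-- the retraction `(D_G)_n : Diag_n NG → W̄_n G`, `(g_i)_i ↦ (g_i d_n ⋯ d_{i+1})_i`. -/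
def DGn (G : SGrp) (n : ℕ) (x : Fin n → G.obj n) : G.WbarN n :=
  fun i => G.gcast (i:ℕ) (G.dcomp (i:ℕ) (n - (i:ℕ)) (x i))

/-- the components `y_i^{(n+1-k)}` of the homotopy `H`, by descending recursion (with fuel). -/
def hAux (G : SGrp) (n k : ℕ) (g : ℕ → G.obj n) : ℕ → ℕ → G.obj n
  | 0, _ => 1
  | fuel+1, i =>
      if k ≤ i + 1 then g i
      else
        aProd (fun j => G.ds i j (G.hAux n k g fuel j)⁻¹) (i+1) (k-1) *
        dProd (fun j => G.ds i (k-1) (g j)) i (k-1)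

end SGrp

/-- recover `k` from the simplex `τ^{n+1-k} ∈ Δ^1_n`: the number of vertices sent to `0`. -/
def kOf {n : ℕ} (t : Fin (n+1) →o Fin 2) : ℕ :=
  (Finset.univ.filter (fun i => t i = 0)).card

namespace SGrp

/-- the homotopy `H_n : Diag_n NG × Δ^1_n → Diag_n NG`. -/
def Hn (G : SGrp) (n : ℕ) (x : Fin n → G.obj n) (t : Fin (n+1) →o Fin 2) : Fin n → G.obj n :=
  fun i => G.hAux n (kOf t) (G.xE x) (n+1) (i:ℕ)

end SGrp

/-- morphisms of simplicial groups. -/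
structure SGrpHom (G G' : SGrp) where
  app : ∀ n, G.obj n → G'.obj n
  comm : ∀ {m n : ℕ} (θ : Fin (m+1) →o Fin (n+1)) (x : G.obj n),
    app m (G.map θ x) = G'.map θ (app n x)
  mul : ∀ (n : ℕ) (x y : G.obj n), app n (x * y) = app n x * app n y

theorem dProd_self' {γ : Type*} [Monoid γ] (f : ℕ → γ) (a : ℕ) : dProd f a a = 1 := by
  cases a with
  | zero => rfl
  | succ b => simp [dProd]

theorem dProd_succ_of_le' {γ : Type*} [Monoid γ] (f : ℕ → γ) {a b : ℕ} (h : a ≤ b) :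
    dProd f a (b+1) = f b * dProd f a b := by simp [dProd, h]

theorem dProd_concat' {γ : Type*} [Monoid γ] (f : ℕ → γ) {a c d : ℕ} (hac : a ≤ c)
    (hcd : c ≤ d) : dProd f c d * dProd f a c = dProd f a d := by
  induction d with
  | zero =>
    have hc0 : c = 0 := by omega
    subst hc0
    simp [dProd_self']
  | succ d ih =>
    rcases Nat.lt_or_ge c (d+1) with h | h
    · have hcd' : c ≤ d := by omega
      rw [dProd_succ_of_le' f hcd', dProd_succ_of_le' f (le_trans hac hcd'), mul_assoc,
        ih hcd']
    · have hc : c = d+1 := by omega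
      subst hc
      simp [dProd_self']

theorem dProd_congr' {γ : Type*} [Monoid γ] {f g : ℕ → γ} {a b : ℕ}
    (h : ∀ j, a ≤ j → j < b → f j = g j) : dProd f a b = dProd g a b := by
  induction b with
  | zero => rfl
  | succ b ih =>
    by_cases hab : a ≤ b
    · rw [dProd_succ_of_le' _ hab, dProd_succ_of_le' _ hab, h b hab (by omega),
        ih (fun j hj hj' => h j hj (by omega))]
    · simp [dProd, hab]

theorem dProd_tele' {γ : Type*} [Monoid γ] (f : ℕ → γ) (F : ℕ → ℕ)
    (hF : ∀ x y, x ≤ y → F x ≤ F y) {a b : ℕ} (hab : a ≤ b) :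
    dProd (fun j => dProd f (F j) (F (j+1))) a b = dProd f (F a) (F b) := by
  induction b with
  | zero =>
    have ha0 : a = 0 := by omega
    subst ha0
    simp [dProd_self']
  | succ b ih =>
    rcases Nat.lt_or_ge a (b+1) with h | h
    · have hab' : a ≤ b := by omega
      rw [dProd_succ_of_le' _ hab', ih hab',
        dProd_concat' f (hF a b hab') (hF b (b+1) (by omega))]
    · have ha : a = b+1 := by omega
      subst ha
      simp [dProd_self']

theorem SGrp.map_one' (G : SGrp) {m n : ℕ} (θ : Fin (m+1) →o Fin (n+1)) :
    G.map θ (1 : G.obj n) = 1 := by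
  have h := G.map_mul θ 1 1
  rw [one_mul] at h
  exact left_eq_mul.mp h

theorem SGrp.map_dProd' (G : SGrp) {m n : ℕ} (θ : Fin (m+1) →o Fin (n+1)) (f : ℕ → G.obj n)
    (a b : ℕ) : G.map θ (dProd f a b) = dProd (fun j => G.map θ (f j)) a b := by
  induction b with
  | zero => exact G.map_one' θ
  | succ b ih =>
    by_cases hab : a ≤ b
    · rw [dProd_succ_of_le' _ hab, dProd_succ_of_le' _ hab, G.map_mul, ih]
    · simp [dProd, hab, G.map_one']

theorem fApp_comp' {l m n : ℕ} (ψ : Fin (l+1) →o Fin (m+1)) (θ : Fin (m+1) →o Fin (n+1))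
    (x : ℕ) : fApp (θ.comp ψ) x = fApp θ (fApp ψ x) := by
  have h : (⟨min (fApp ψ x) m, Nat.lt_succ_of_le (Nat.min_le_right _ _)⟩ : Fin (m+1))
      = ψ ⟨min x l, Nat.lt_succ_of_le (Nat.min_le_right _ _)⟩ := by
    apply Fin.ext
    have h1 : fApp ψ x ≤ m := fApp_le ψ x
    show min (fApp ψ x) m = _
    rw [Nat.min_eq_left h1]
    rfl
  show ((θ.comp ψ) ⟨min x l, _⟩ : ℕ) = (θ ⟨min (fApp ψ x) m, _⟩ : ℕ)
  rw [h]
  rfl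

theorem fApp_castSucc' {m n : ℕ} (θ : Fin (m+1) →o Fin (n+1)) (i : Fin m) :
    fApp θ (i:ℕ) = (θ i.castSucc : ℕ) := by
  have := fApp_coe θ i.castSucc
  rwa [Fin.coe_castSucc] at this

theorem fApp_succ' {m n : ℕ} (θ : Fin (m+1) →o Fin (n+1)) (i : Fin m) :
    fApp θ ((i:ℕ)+1) = (θ i.succ : ℕ) := by
  have := fApp_coe θ i.succ
  rwa [Fin.val_succ] at this

theorem restrict_comp' {l m n : ℕ} (ψ : Fin (l+1) →o Fin (m+1)) (θ : Fin (m+1) →o Fin (n+1))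
    {i j : ℕ} (k : ℕ) (hij : fApp ψ i ≤ j) :
    (restrictOH θ j k).comp (restrictOH ψ i j) = restrictOH (θ.comp ψ) i k := by
  ext a
  show min (fApp θ (min (fApp ψ (a:ℕ)) j)) k = min (fApp (θ.comp ψ) (a:ℕ)) k
  have ha : fApp ψ (a:ℕ) ≤ j := le_trans (fApp_mono ψ (by have := a.isLt; omega)) hij
  rw [Nat.min_eq_left ha, fApp_comp']

theorem restrict_id' {n : ℕ} {i : ℕ} (hi : i ≤ n) :
    restrictOH (OrderHom.id : Fin (n+1) →o Fin (n+1)) i i = OrderHom.id := by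
  ext a
  show min (fApp OrderHom.id (a:ℕ)) i = (a:ℕ)
  have ha : (a:ℕ) ≤ i := by have := a.isLt; omega
  show min ((⟨min (a:ℕ) n, _⟩ : Fin (n+1)) : ℕ) i = (a:ℕ)
  simp only
  omega

end Paper
open Paper Paper.SGrp in
/-- the Kan classifying construction `W̄G` of a simplicial group `G`
is a simplicial set. -/
theorem stmt_5 (G : SGrp) :
    (∀ {n : ℕ} (g : G.WbarN n), G.wbarMap OrderHom.id g = g) ∧
    (∀ {l m n : ℕ} (ψ : Fin (l+1) →o Fin (m+1)) (θ : Fin (m+1) →o Fin (n+1)) (g : G.WbarN n),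
      G.wbarMap ψ (G.wbarMap θ g) = G.wbarMap (θ.comp ψ) g) := by
  constructor
  · intro n g
    funext i
    show dProd (fun j => G.map (restrictOH OrderHom.id (i:ℕ) j) (G.gE g j))
        ((OrderHom.id (α := Fin (n+1)) i.castSucc : Fin (n+1)) : ℕ)
        ((OrderHom.id (α := Fin (n+1)) i.succ : Fin (n+1)) : ℕ) = g i
    simp only [OrderHom.id_coe, id_eq, Fin.coe_castSucc, Fin.val_succ]
    rw [dProd_succ_of_le' _ (le_refl _), dProd_self', mul_one,
      restrict_id' (by have := i.isLt; omega), G.map_id]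
    simp [SGrp.gE, i.isLt]
  · intro l m n ψ θ g
    funext i
    set f : ℕ → G.obj (i:ℕ) := fun k => G.map (restrictOH (θ.comp ψ) (i:ℕ) k) (G.gE g k)
      with hf
    show dProd (fun j => G.map (restrictOH ψ (i:ℕ) j) (G.gE (G.wbarMap θ g) j))
        ((ψ i.castSucc : Fin (m+1)) : ℕ) ((ψ i.succ : Fin (m+1)) : ℕ)
      = dProd f (((θ.comp ψ) i.castSucc : Fin (n+1)) : ℕ)
        (((θ.comp ψ) i.succ : Fin (n+1)) : ℕ)
    rw [← fApp_castSucc' ψ i, ← fApp_succ' ψ i, ← fApp_castSucc' (θ.comp ψ) i,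
      ← fApp_succ' (θ.comp ψ) i, fApp_comp', fApp_comp']
    rw [← dProd_tele' f (fApp θ) (fun x y h => fApp_mono θ h)
      (fApp_mono ψ (by omega))]
    apply dProd_congr'
    intro j hj1 hj2
    have hjm : j < m := lt_of_lt_of_le hj2 (fApp_le ψ _)
    have hgE : G.gE (G.wbarMap θ g) j = G.wbarMap θ g ⟨j, hjm⟩ := by
      simp [SGrp.gE, hjm]
    rw [hgE]
    show G.map (restrictOH ψ (i:ℕ) j)
        (dProd (fun k => G.map (restrictOH θ ((⟨j, hjm⟩ : Fin m) : ℕ) k) (G.gE g k))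
          ((θ (⟨j, hjm⟩ : Fin m).castSucc : Fin (n+1)) : ℕ)
          ((θ (⟨j, hjm⟩ : Fin m).succ : Fin (n+1)) : ℕ)) = _
    rw [← fApp_castSucc' θ ⟨j, hjm⟩, ← fApp_succ' θ ⟨j, hjm⟩]
    rw [G.map_dProd']
    apply dProd_congr'
    intro k _ _
    show G.map (restrictOH ψ (i:ℕ) j) (G.map (restrictOH θ j k) (G.gE g k)) = f k
    rw [G.map_comp, restrict_comp' ψ θ k hj1]
end

section
/- For a simplicial group G, the maps (S_G)_n : W̄_n G → Diag_n NG defined by descending recursion y_i = (∏_{j=i+1}^{n−1} y_j^{−1} d_j ⋯ d_{i+1} s_i ⋯ s_{j−1}) (∏_{j=n−1}^{i} g_j d_j ⋯ d_{i+1} s_i ⋯ s_{n−1}) commute with all degeneracy maps: for all k ∈ [0,n] and x ∈ W̄_n G, (x s_k)(S_G)_{n+1} = (x (S_G)_n) s_k. -/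
namespace Paper

theorem my_coe_mk' {α β : Type*} [Preorder α] [Preorder β] (f : α → β)
    (hf : ∀ ⦃i j : α⦄, i ≤ j → f i ≤ f j) : ⇑(OrderHom.mk f hf) = f := rfl

section ProdLemmas

variable {γ : Type*} [Monoid γ] {δ : Type*} [Monoid δ]

theorem my_aProd_of_le (f : ℕ → γ) {a b : ℕ} (h : b ≤ a) : aProd f a b = 1 := by
  cases b with
  | zero => rfl
  | succ b => exact if_neg (by omega)

theorem my_dProd_of_le (f : ℕ → γ) {a b : ℕ} (h : b ≤ a) : dProd f a b = 1 := by
  cases b with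
  | zero => rfl
  | succ b => exact if_neg (by omega)

theorem my_aProd_succ (f : ℕ → γ) {a b : ℕ} (h : a ≤ b) :
    aProd f a (b+1) = aProd f a b * f b := if_pos h

theorem my_dProd_succ (f : ℕ → γ) {a b : ℕ} (h : a ≤ b) :
    dProd f a (b+1) = f b * dProd f a b := if_pos h

theorem my_aProd_congr {f g : ℕ → γ} {a b : ℕ} (h : ∀ j, a ≤ j → j < b → f j = g j) :
    aProd f a b = aProd g a b := by
  induction b with
  | zero => rfl
  | succ b ih =>
    by_cases hab : a ≤ b
    · rw [my_aProd_succ f hab, my_aProd_succ g hab,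
        ih (fun j h1 h2 => h j h1 (by omega)), h b hab (by omega)]
    · rw [my_aProd_of_le f (by omega), my_aProd_of_le g (by omega)]

theorem my_dProd_congr {f g : ℕ → γ} {a b : ℕ} (h : ∀ j, a ≤ j → j < b → f j = g j) :
    dProd f a b = dProd g a b := by
  induction b with
  | zero => rfl
  | succ b ih =>
    by_cases hab : a ≤ b
    · rw [my_dProd_succ f hab, my_dProd_succ g hab,
        ih (fun j h1 h2 => h j h1 (by omega)), h b hab (by omega)]
    · rw [my_dProd_of_le f (by omega), my_dProd_of_le g (by omega)]

theorem my_aProd_hom (φ : γ → δ) (hm : ∀ x y : γ, φ (x * y) = φ x * φ y) (h1 : φ 1 = 1)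
    (f : ℕ → γ) (a b : ℕ) : φ (aProd f a b) = aProd (fun j => φ (f j)) a b := by
  induction b with
  | zero => exact h1
  | succ b ih =>
    by_cases hab : a ≤ b
    · rw [my_aProd_succ f hab, my_aProd_succ _ hab, hm, ih]
    · rw [my_aProd_of_le f (by omega), my_aProd_of_le _ (by omega), h1]

theorem my_dProd_hom (φ : γ → δ) (hm : ∀ x y : γ, φ (x * y) = φ x * φ y) (h1 : φ 1 = 1)
    (f : ℕ → γ) (a b : ℕ) : φ (dProd f a b) = dProd (fun j => φ (f j)) a b := by
  induction b with
  | zero => exact h1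
  | succ b ih =>
    by_cases hab : a ≤ b
    · rw [my_dProd_succ f hab, my_dProd_succ _ hab, hm, ih]
    · rw [my_dProd_of_le f (by omega), my_dProd_of_le _ (by omega), h1]

theorem my_aProd_shift (f : ℕ → γ) (a b : ℕ) :
    aProd f (a+1) (b+1) = aProd (fun j => f (j+1)) a b := by
  induction b with
  | zero => rw [my_aProd_of_le f (by omega)]; rfl
  | succ b ih =>
    by_cases hab : a ≤ b
    · rw [my_aProd_succ f (by omega), my_aProd_succ _ hab, ih]
    · rw [my_aProd_of_le f (by omega), my_aProd_of_le _ (by omega)]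

theorem my_dProd_shift (f : ℕ → γ) (a b : ℕ) :
    dProd f (a+1) (b+1) = dProd (fun j => f (j+1)) a b := by
  induction b with
  | zero => rw [my_dProd_of_le f (by omega)]; rfl
  | succ b ih =>
    by_cases hab : a ≤ b
    · rw [my_dProd_succ f (by omega), my_dProd_succ _ hab, ih]
    · rw [my_dProd_of_le f (by omega), my_dProd_of_le _ (by omega)]

theorem my_aProd_split (f : ℕ → γ) {a b c : ℕ} (h1 : a ≤ b) (h2 : b ≤ c) :
    aProd f a c = aProd f a b * aProd f b c := by
  induction c, h2 using Nat.le_induction with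
  | base => rw [my_aProd_of_le f (le_refl b), mul_one]
  | succ c hbc ih =>
    rw [my_aProd_succ f (by omega), my_aProd_succ f hbc, ih, mul_assoc]

theorem my_dProd_split (f : ℕ → γ) {a b c : ℕ} (h1 : a ≤ b) (h2 : b ≤ c) :
    dProd f a c = dProd f b c * dProd f a b := by
  induction c, h2 using Nat.le_induction with
  | base => rw [my_dProd_of_le f (le_refl b), one_mul]
  | succ c hbc ih =>
    rw [my_dProd_succ f (by omega), my_dProd_succ f hbc, ih, mul_assoc]

theorem my_aProd_single (f : ℕ → γ) (a : ℕ) : aProd f a (a+1) = f a := by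
  rw [my_aProd_succ f (le_refl a), my_aProd_of_le f (le_refl a), one_mul]

theorem my_dProd_single (f : ℕ → γ) (a : ℕ) : dProd f a (a+1) = f a := by
  rw [my_dProd_succ f (le_refl a), my_dProd_of_le f (le_refl a), mul_one]

end ProdLemmas

namespace SGrp

variable (G : SGrp)

theorem my_map_one {m n : ℕ} (θ : Fin (m+1) →o Fin (n+1)) : G.map θ (1 : G.obj n) = 1 := by
  have h := G.map_mul θ 1 1
  rw [mul_one] at h
  exact mul_left_cancel (a := G.map θ 1) (by rw [← h, mul_one])

theorem my_map_inv {m n : ℕ} (θ : Fin (m+1) →o Fin (n+1)) (x : G.obj n) :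
    G.map θ x⁻¹ = (G.map θ x)⁻¹ := by
  apply eq_inv_of_mul_eq_one_left
  rw [← G.map_mul, inv_mul_cancel, my_map_one]

theorem my_gcast_self {a : ℕ} (x : G.obj a) : G.gcast a x = x := by
  simp [SGrp.gcast]

theorem my_gcast_map {a a' b b' : ℕ} (ha : a = a') (hb : b = b')
    (θ : Fin (a+1) →o Fin (b+1)) (θ' : Fin (a'+1) →o Fin (b'+1))
    (hf : ∀ t : ℕ, fApp θ t = fApp θ' t) (x : G.obj b) :
    G.gcast a' (G.map θ x) = G.map θ' (G.gcast b' x) := by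
  subst ha
  subst hb
  have hθ : θ = θ' := by
    apply OrderHom.ext
    funext p
    apply Fin.ext
    rw [← fApp_coe θ p, ← fApp_coe θ' p, hf]
  rw [hθ, my_gcast_self, my_gcast_self]

end SGrp

/-- explicit order hom for descending composites of faces. -/
def my_dcompOH (i c N : ℕ) : Fin (N-c+1) →o Fin (N+1) where
  toFun t := ⟨min (if (t:ℕ) ≤ i then (t:ℕ) else (t:ℕ) + c) N,
    Nat.lt_succ_of_le (Nat.min_le_right _ _)⟩
  monotone' := by
    intro a b hab
    have h : (a:ℕ) ≤ (b:ℕ) := hab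
    simp only [Fin.mk_le_mk]
    split_ifs <;> omega

/-- explicit order hom for ascending composites of degeneracies. -/
def my_scompOH (i c M : ℕ) : Fin (M+c+1) →o Fin (M+1) where
  toFun t := ⟨min ((t:ℕ) - min ((t:ℕ) - i) c) M, Nat.lt_succ_of_le (Nat.min_le_right _ _)⟩
  monotone' := by
    intro a b hab
    have h : (a:ℕ) ≤ (b:ℕ) := hab
    simp only [Fin.mk_le_mk]
    omega

/-- explicit order hom for `ds`. -/
def my_dsOH (i c N : ℕ) : Fin (N+1) →o Fin (N+1) where
  toFun t := ⟨min (if min ((t:ℕ) - min ((t:ℕ) - i) c) (N - c) ≤ i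
      then min ((t:ℕ) - min ((t:ℕ) - i) c) (N - c)
      else min ((t:ℕ) - min ((t:ℕ) - i) c) (N - c) + c) N,
    Nat.lt_succ_of_le (Nat.min_le_right _ _)⟩
  monotone' := by
    intro a b hab
    have h : (a:ℕ) ≤ (b:ℕ) := hab
    simp only [Fin.mk_le_mk]
    split_ifs <;> omega

/-- inclusion-like order hom `[i] → [j]`. -/
def my_midOH (i j : ℕ) : Fin (i+1) →o Fin (j+1) where
  toFun t := ⟨min (t:ℕ) j, Nat.lt_succ_of_le (Nat.min_le_right _ _)⟩
  monotone' := by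
    intro a b hab
    have h : (a:ℕ) ≤ (b:ℕ) := hab
    simp only [Fin.mk_le_mk]
    omega

/-- explicit order hom for `dsTo`. -/
def my_dsToOH (i n j : ℕ) : Fin (n+1) →o Fin (j+1) where
  toFun t := ⟨min (t:ℕ) (min i j),
    Nat.lt_succ_of_le (le_trans (Nat.min_le_right _ _) (Nat.min_le_right i j))⟩
  monotone' := by
    intro a b hab
    have h : (a:ℕ) ≤ (b:ℕ) := hab
    simp only [Fin.mk_le_mk]
    omega

namespace SGrp

variable (G : SGrp)

theorem my_dcomp_map (i c : ℕ) {N : ℕ} (x : G.obj N) :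
    G.dcomp i c x = G.map (my_dcompOH i c N) x := by
  induction c generalizing i with
  | zero =>
    have h : my_dcompOH i 0 N = OrderHom.id := by
      apply OrderHom.ext
      funext t
      apply Fin.ext
      have := t.isLt
      simp [my_dcompOH]
      omega
    rw [h, G.map_id]
    rfl
  | succ c ih =>
    show G.face (i+1) (G.dcomp (i+1) c x) = _
    rw [ih (i+1)]
    show G.map (δOH (i+1) (N - c - 1) (N - c)) _ = _
    rw [G.map_comp]
    have h : (my_dcompOH (i+1) c N).comp (δOH (i+1) (N - c - 1) (N - c))
        = my_dcompOH i (c+1) N := by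
      apply OrderHom.ext
      funext t
      apply Fin.ext
      have := t.isLt
      simp [my_dcompOH, δOH, OrderHom.comp, my_coe_mk']
      split_ifs <;> omega
    rw [h]

theorem my_scomp_map (i c : ℕ) {M : ℕ} (x : G.obj M) :
    G.scomp i c x = G.map (my_scompOH i c M) x := by
  induction c with
  | zero =>
    have h : my_scompOH i 0 M = OrderHom.id := by
      apply OrderHom.ext
      funext t
      apply Fin.ext
      have := t.isLt
      simp [my_scompOH]
      omega
    rw [h, G.map_id]
    rfl
  | succ c ih =>
    show G.deg (i+c) (G.scomp i c x) = _
    rw [ih]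
    show G.map (σOH (i+c) (M+c+1) (M+c)) _ = _
    rw [G.map_comp]
    have h : (my_scompOH i c M).comp (σOH (i+c) (M+c+1) (M+c))
        = my_scompOH i (c+1) M := by
      apply OrderHom.ext
      funext t
      apply Fin.ext
      have := t.isLt
      simp [my_scompOH, σOH, OrderHom.comp, my_coe_mk']
      split_ifs <;> omega
    rw [h]

theorem my_ds_map (i j : ℕ) {N : ℕ} (x : G.obj N) :
    G.ds i j x = G.map (my_dsOH i (min (j-i) N) N) x := by
  show G.gcast N (G.scomp i (min (j-i) N) (G.dcomp i (min (j-i) N) x)) = _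
  set c := min (j - i) N with hcdef
  have hc : c ≤ N := Nat.min_le_right _ _
  rw [G.my_dcomp_map, G.my_scomp_map, G.map_comp]
  rw [G.my_gcast_map (show N - c + c = N by omega) rfl
    ((my_dcompOH i c N).comp (my_scompOH i c (N-c))) (my_dsOH i c N) ?_ x, G.my_gcast_self]
  intro t
  simp [fApp, my_dcompOH, my_scompOH, my_dsOH, OrderHom.comp, my_coe_mk']
  split_ifs <;> omega

theorem my_dsTo_map (i n : ℕ) {j : ℕ} (hij : i ≤ j) (hin : i ≤ n) (x : G.obj j) :
    G.dsTo i n x = G.map (my_dsToOH i n j) x := by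
  show G.gcast n (G.scomp i (n-i) (G.gcast i (G.dcomp i (j-i) x))) = _
  rw [G.my_dcomp_map]
  rw [G.my_gcast_map (show j - (j-i) = i by omega) rfl
    (my_dcompOH i (j-i) j) (my_midOH i j) ?_ x, G.my_gcast_self]
  · rw [G.my_scomp_map, G.map_comp]
    rw [G.my_gcast_map (show i + (n-i) = n by omega) rfl
      ((my_midOH i j).comp (my_scompOH i (n-i) i)) (my_dsToOH i n j) ?_ x, G.my_gcast_self]
    intro t
    simp [fApp, my_midOH, my_scompOH, my_dsToOH, OrderHom.comp, my_coe_mk']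
    omega
  · intro t
    simp [fApp, my_dcompOH, my_midOH, my_coe_mk']
    split_ifs <;> omega

theorem my_gcast_one (G : SGrp) {a b : ℕ} : G.gcast b (1 : G.obj a) = 1 := by
  unfold SGrp.gcast
  split
  · rename_i h; subst h; rfl
  · rfl

variable (G : SGrp)

theorem my_deg_mul (k : ℕ) {M : ℕ} (x y : G.obj M) :
    G.deg k (x * y) = G.deg k x * G.deg k y := G.map_mul _ _ _

theorem my_deg_one (k : ℕ) {M : ℕ} : G.deg k (1 : G.obj M) = 1 := G.my_map_one _

theorem my_deg_inv (k : ℕ) {M : ℕ} (x : G.obj M) : G.deg k x⁻¹ = (G.deg k x)⁻¹ :=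
  G.my_map_inv _ _

theorem my_ds_one (i j : ℕ) {N : ℕ} : G.ds i j (1 : G.obj N) = 1 := by
  rw [G.my_ds_map, G.my_map_one]

theorem my_dsTo_one (i n j : ℕ) : G.dsTo i n (1 : G.obj j) = 1 := by
  show G.gcast n (G.scomp i (n-i) (G.gcast i (G.dcomp i (j-i) (1:G.obj j)))) = 1
  rw [G.my_dcomp_map, G.my_map_one, G.my_gcast_one, G.my_scomp_map, G.my_map_one, G.my_gcast_one]

theorem my_ds_refl (i : ℕ) {N : ℕ} (x : G.obj N) : G.ds i i x = x := by
  rw [G.my_ds_map]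
  have h : my_dsOH i (min (i-i) N) N = OrderHom.id := by
    apply OrderHom.ext
    funext t
    apply Fin.ext
    have := t.isLt
    simp [my_dsOH]
    omega
  rw [h, G.map_id]

theorem my_dsOH_val (i c N : ℕ) (hic : i + c ≤ N) (t : Fin (N+1)) :
    ((my_dsOH i c N) t : ℕ) = if (t:ℕ) ≤ i then (t:ℕ) else if (t:ℕ) ≤ i + c then i else (t:ℕ) := by
  have := t.isLt
  simp only [my_dsOH, OrderHom.coe_mk, my_coe_mk']
  split_ifs <;> omega

theorem my_σOH_val (k a b : ℕ) (t : Fin (a+1)) :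
    ((σOH k a b) t : ℕ) = min (if (t:ℕ) ≤ k then (t:ℕ) else (t:ℕ) - 1) b := rfl

theorem my_ds_deg {n : ℕ} (k i j : ℕ) (hk : k ≤ n) (hij : i ≤ j) (hj : j ≤ n) (hjk : j ≠ k)
    (z : G.obj n) :
    G.ds i j (G.deg k z)
      = G.deg k (G.ds (if i ≤ k then i else i - 1) (if j ≤ k then j else j - 1) z) := by
  rw [G.my_ds_map, G.my_ds_map]
  show G.map _ (G.map (σOH k (n+1) n) z) = G.map (σOH k (n+1) n) (G.map _ z)
  rw [G.map_comp, G.map_comp]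
  congr 1
  apply OrderHom.ext
  funext t
  apply Fin.ext
  have ht := t.isLt
  simp only [OrderHom.comp_coe, Function.comp_apply]
  rw [my_σOH_val, my_dsOH_val _ _ _ (by omega : i + min (j-i) (n+1) ≤ n+1),
    my_dsOH_val _ _ _ (by split_ifs <;> omega), my_σOH_val]
  split_ifs <;> omega

theorem my_dsTo_deg {m : ℕ} (k i n : ℕ) (hk : k ≤ m) (hkn : k ≤ n) (him : i ≤ m+1)
    (hin : i ≤ n) (z : G.obj m) :
    G.dsTo i (n+1) (G.deg k z) = G.deg k (G.dsTo (if i ≤ k then i else i - 1) n z) := by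
  rw [G.my_dsTo_map i (n+1) him (by omega), G.my_dsTo_map _ n (by split_ifs <;> omega)
    (by split_ifs <;> omega)]
  show G.map _ (G.map (σOH k (m+1) m) z) = G.map (σOH k (n+1) n) (G.map _ z)
  rw [G.map_comp, G.map_comp]
  congr 1
  apply OrderHom.ext
  funext t
  apply Fin.ext
  have := t.isLt
  simp only [my_dsToOH, σOH, OrderHom.comp_coe, Function.comp_apply, OrderHom.coe_mk, my_coe_mk']
  split_ifs <;> omega

theorem my_dsTo_nodeg {m : ℕ} (k i n : ℕ) (hik : i ≤ k) (him : i ≤ m) (hin : i ≤ n)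
    (hkn : k ≤ n) (z : G.obj m) :
    G.dsTo i (n+1) z = G.deg k (G.dsTo i n z) := by
  rw [G.my_dsTo_map i (n+1) (by omega) (by omega), G.my_dsTo_map i n (by omega) (by omega)]
  show _ = G.map (σOH k (n+1) n) (G.map _ z)
  rw [G.map_comp]
  congr 1
  apply OrderHom.ext
  funext t
  apply Fin.ext
  have := t.isLt
  simp only [my_dsToOH, σOH, OrderHom.comp_coe, Function.comp_apply, OrderHom.coe_mk, my_coe_mk']
  split_ifs <;> omega

theorem my_yAux_succ (n : ℕ) (g : ∀ j : ℕ, G.obj j) :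
    ∀ (f i : ℕ), n ≤ f + i → G.yAux n g (f+1) i = G.yAux n g f i := by
  intro f
  induction f with
  | zero =>
    intro i h
    show _ * _ = 1
    rw [my_aProd_of_le _ (by omega), my_dProd_of_le _ (by omega), one_mul]
  | succ f ih =>
    intro i h
    show aProd _ (i+1) n * dProd _ i n = aProd _ (i+1) n * dProd _ i n
    congr 1
    apply my_aProd_congr
    intro j h1 h2
    rw [ih j (by omega)]

theorem my_yAux_eq (n : ℕ) (g : ∀ j : ℕ, G.obj j) :
    ∀ f1 f2 i : ℕ, n ≤ f1 + i → n ≤ f2 + i → G.yAux n g f1 i = G.yAux n g f2 i := by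
  have mono : ∀ f2 f1 i : ℕ, f1 ≤ f2 → n ≤ f1 + i → G.yAux n g f2 i = G.yAux n g f1 i := by
    intro f2
    induction f2 with
    | zero =>
      intro f1 i h1 h2
      have : f1 = 0 := by omega
      subst this
      rfl
    | succ f2 ih =>
      intro f1 i h1 h2
      by_cases hf : f1 = f2 + 1
      · subst hf; rfl
      · rw [G.my_yAux_succ n g f2 i (by omega), ih f1 i (by omega) h2]
  intro f1 f2 i h1 h2
  rcases le_total f1 f2 with h | h
  · exact (mono f2 f1 i h h1).symm
  · exact mono f1 f2 i h h2

end SGrp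

end Paper

open Paper Paper.SGrp in
/-- the maps `(S_G)_n : W̄_n G → Diag_n NG` commute with all degeneracy maps. -/
theorem stmt_9 (G : SGrp) (n : ℕ) (k : ℕ) (hk : k ≤ n) (x : G.WbarN n) :
    G.SGn (n+1) (G.wbarMap (σOH k (n+1) n) x) = G.diagMap (σOH k (n+1) n) (G.SGn n x) := by
  have hσval : ∀ (p : Fin (n+2)), ((σOH k (n+1) n) p : ℕ)
      = min (if (p:ℕ) ≤ k then (p:ℕ) else (p:ℕ) - 1) n := fun p => rfl
  have hgE : ∀ (g : G.WbarN (n+1)) (j : ℕ) (h : j < n+1), G.gE g j = g ⟨j, h⟩ := by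
    intro g j h
    simp only [SGrp.gE]
    rw [dif_pos h]
  have hgEx : ∀ (j : ℕ) (h : j < n), G.gE x j = x ⟨j, h⟩ := by
    intro j h
    simp only [SGrp.gE]
    rw [dif_pos h]
  have hrid : ∀ j : ℕ, j < k → restrictOH (σOH k (n+1) n) j j = OrderHom.id := by
    intro j hj
    apply OrderHom.ext
    funext t
    apply Fin.ext
    have := t.isLt
    simp only [restrictOH, σOH, fApp, OrderHom.coe_mk, OrderHom.id_coe, id_eq, my_coe_mk']
    split_ifs <;> omega
  have hres : ∀ j' : ℕ, k ≤ j' → j' < n →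
      restrictOH (σOH k (n+1) n) (j'+1) j' = σOH k (j'+1) j' := by
    intro j' h1 h2
    apply OrderHom.ext
    funext t
    apply Fin.ext
    have := t.isLt
    simp only [restrictOH, σOH, fApp, OrderHom.coe_mk, my_coe_mk']
    split_ifs <;> omega
  have F1 : ∀ j : ℕ, j < k → G.gE (G.wbarMap (σOH k (n+1) n) x) j = G.gE x j := by
    intro j hj
    have hjn : j < n + 1 := by omega
    rw [hgE _ j hjn]
    simp only [SGrp.wbarMap]
    rw [show (((σOH k (n+1) n) (⟨j, hjn⟩ : Fin (n+1)).castSucc : Fin (n+1)) : ℕ) = j by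
        rw [hσval]; simp only [Fin.coe_castSucc]; split_ifs <;> omega,
      show (((σOH k (n+1) n) (⟨j, hjn⟩ : Fin (n+1)).succ : Fin (n+1)) : ℕ) = j + 1 by
        rw [hσval]; simp only [Fin.val_succ]; split_ifs <;> omega]
    refine (my_dProd_single _ _).trans ?_
    show G.map (restrictOH (σOH k (n+1) n) j j) (G.gE x j) = G.gE x j
    rw [hrid j hj, G.map_id]
  have F2 : G.gE (G.wbarMap (σOH k (n+1) n) x) k = 1 := by
    have hjn : k < n + 1 := by omega
    rw [hgE _ k hjn]
    simp only [SGrp.wbarMap]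
    rw [show (((σOH k (n+1) n) (⟨k, hjn⟩ : Fin (n+1)).castSucc : Fin (n+1)) : ℕ) = k by
        rw [hσval]; simp only [Fin.coe_castSucc]; split_ifs <;> omega,
      show (((σOH k (n+1) n) (⟨k, hjn⟩ : Fin (n+1)).succ : Fin (n+1)) : ℕ) = k by
        rw [hσval]; simp only [Fin.val_succ]; split_ifs <;> omega]
    exact my_dProd_of_le _ (le_refl k)
  have F3 : ∀ j' : ℕ, k ≤ j' → j' < n →
      G.gE (G.wbarMap (σOH k (n+1) n) x) (j'+1) = G.deg k (G.gE x j') := by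
    intro j' h1 h2
    have hjn : j' + 1 < n + 1 := by omega
    rw [hgE _ (j'+1) hjn]
    simp only [SGrp.wbarMap]
    rw [show (((σOH k (n+1) n) (⟨j'+1, hjn⟩ : Fin (n+1)).castSucc : Fin (n+1)) : ℕ) = j' by
        rw [hσval]; simp only [Fin.coe_castSucc]; split_ifs <;> omega,
      show (((σOH k (n+1) n) (⟨j'+1, hjn⟩ : Fin (n+1)).succ : Fin (n+1)) : ℕ) = j' + 1 by
        rw [hσval]; simp only [Fin.val_succ]; split_ifs <;> omega]
    refine (my_dProd_single _ _).trans ?_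
    show G.map (restrictOH (σOH k (n+1) n) (j'+1) j') (G.gE x j') = G.deg k (G.gE x j')
    rw [hres j' h1 h2]
    rfl
  have unfold' : ∀ i : ℕ, G.yAux (n+1) (G.gE (G.wbarMap (σOH k (n+1) n) x)) (n+1) i
      = aProd (fun j => G.ds i j ((G.yAux (n+1) (G.gE (G.wbarMap (σOH k (n+1) n) x)) (n+1) j)⁻¹)) (i+1) (n+1) * dProd (fun j => G.dsTo i (n+1) (G.gE (G.wbarMap (σOH k (n+1) n) x) j)) i (n+1) := by
    intro i
    rw [G.my_yAux_eq (n+1) _ (n+1) (n+2) i (by omega) (by omega)]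
    rfl
  have unfoldY : ∀ i : ℕ, G.yAux n (G.gE x) (n+1) i
      = aProd (fun j => G.ds i j ((G.yAux n (G.gE x) (n+1) j)⁻¹)) (i+1) n * dProd (fun j => G.dsTo i n (G.gE x j)) i n := by
    intro i
    rw [G.my_yAux_eq n _ (n+1) (n+2) i (by omega) (by omega)]
    rfl
  have ytop : ∀ i : ℕ, n ≤ i → G.yAux n (G.gE x) (n+1) i = 1 := by
    intro i h
    rw [unfoldY i, my_aProd_of_le _ (by omega), my_dProd_of_le _ (by omega), one_mul]
  have key : ∀ d : ℕ, ∀ i : ℕ, i ≤ n → n - i < d →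
      G.yAux (n+1) (G.gE (G.wbarMap (σOH k (n+1) n) x)) (n+1) i
        = if i < k then G.deg k (G.yAux n (G.gE x) (n+1) i)
          else if i = k then 1
          else G.deg k (G.yAux n (G.gE x) (n+1) (i-1)) := by
    intro d
    induction d with
    | zero => intro i _ h; omega
    | succ d ih =>
      intro i hi hd
      rcases Nat.lt_trichotomy i k with hik | hik | hik
      · -- i < k
        rw [unfold' i, if_pos hik]
        have hA1 : ∀ j, i + 1 ≤ j → j < k →
            G.ds i j ((G.yAux (n+1) (G.gE (G.wbarMap (σOH k (n+1) n) x)) (n+1) j)⁻¹) = G.deg k (G.ds i j ((G.yAux n (G.gE x) (n+1) j)⁻¹)) := by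
          intro j h1 h2
          rw [ih j (by omega) (by omega), if_pos h2, ← G.my_deg_inv,
            G.my_ds_deg k i j hk (by omega) (by omega) (by omega),
            if_pos (by omega : i ≤ k), if_pos (by omega : j ≤ k)]
        have hAk : G.ds i k ((G.yAux (n+1) (G.gE (G.wbarMap (σOH k (n+1) n) x)) (n+1) k)⁻¹) = 1 := by
          rw [ih k hk (by omega), if_neg (lt_irrefl k), if_pos rfl, inv_one, G.my_ds_one]
        have hA2 : ∀ j', k ≤ j' → j' < n →
            G.ds i (j'+1) ((G.yAux (n+1) (G.gE (G.wbarMap (σOH k (n+1) n) x)) (n+1) (j'+1))⁻¹) = G.deg k (G.ds i j' ((G.yAux n (G.gE x) (n+1) j')⁻¹)) := by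
          intro j' h1 h2
          rw [ih (j'+1) (by omega) (by omega), if_neg (by omega), if_neg (by omega),
            Nat.add_sub_cancel, ← G.my_deg_inv,
            G.my_ds_deg k i (j'+1) hk (by omega) (by omega) (by omega),
            if_pos (by omega : i ≤ k), if_neg (by omega : ¬ j' + 1 ≤ k), Nat.add_sub_cancel]
        have hB1 : ∀ j, i ≤ j → j < k →
            G.dsTo i (n+1) (G.gE (G.wbarMap (σOH k (n+1) n) x) j) = G.deg k (G.dsTo i n (G.gE x j)) := by
          intro j h1 h2
          rw [F1 j h2]
          exact G.my_dsTo_nodeg k i n (by omega) (by omega) (by omega) (by omega) _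
        have hBk : G.dsTo i (n+1) (G.gE (G.wbarMap (σOH k (n+1) n) x) k) = 1 := by
          rw [F2, G.my_dsTo_one]
        have hB2 : ∀ j', k ≤ j' → j' < n →
            G.dsTo i (n+1) (G.gE (G.wbarMap (σOH k (n+1) n) x) (j'+1)) = G.deg k (G.dsTo i n (G.gE x j')) := by
          intro j' h1 h2
          rw [F3 j' h1 h2,
            G.my_dsTo_deg k i n (by omega) (by omega) (by omega) (by omega),
            if_pos (by omega : i ≤ k)]
        have EA : aProd (fun j => G.ds i j ((G.yAux (n+1) (G.gE (G.wbarMap (σOH k (n+1) n) x)) (n+1) j)⁻¹)) (i+1) (n+1)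
            = G.deg k (aProd (fun j => G.ds i j ((G.yAux n (G.gE x) (n+1) j)⁻¹)) (i+1) n) := by
          rw [my_aProd_split _ (show i+1 ≤ k by omega) (show k ≤ n+1 by omega),
            my_aProd_split _ (show k ≤ k+1 by omega) (show k+1 ≤ n+1 by omega)]
          have h1 : aProd (fun j => G.ds i j ((G.yAux (n+1) (G.gE (G.wbarMap (σOH k (n+1) n) x)) (n+1) j)⁻¹)) k (k+1) = 1 := by
            rw [my_aProd_single]; exact hAk
          have h2 : aProd (fun j => G.ds i j ((G.yAux (n+1) (G.gE (G.wbarMap (σOH k (n+1) n) x)) (n+1) j)⁻¹)) (k+1) (n+1) = aProd (fun j => G.deg k (G.ds i j ((G.yAux n (G.gE x) (n+1) j)⁻¹))) k n := by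
            rw [my_aProd_shift]
            exact my_aProd_congr (fun j hj1 hj2 => hA2 j hj1 hj2)
          have h3 : aProd (fun j => G.ds i j ((G.yAux (n+1) (G.gE (G.wbarMap (σOH k (n+1) n) x)) (n+1) j)⁻¹)) (i+1) k = aProd (fun j => G.deg k (G.ds i j ((G.yAux n (G.gE x) (n+1) j)⁻¹))) (i+1) k :=
            my_aProd_congr (fun j hj1 hj2 => hA1 j hj1 (by omega))
          rw [h1, h2, h3, one_mul,
            ← my_aProd_split (fun j => G.deg k (G.ds i j ((G.yAux n (G.gE x) (n+1) j)⁻¹))) (show i+1 ≤ k by omega) (show k ≤ n by omega),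
            my_aProd_hom (G.deg k) (G.my_deg_mul k) (G.my_deg_one k) (fun j => G.ds i j ((G.yAux n (G.gE x) (n+1) j)⁻¹)) (i+1) n]
        have EB : dProd (fun j => G.dsTo i (n+1) (G.gE (G.wbarMap (σOH k (n+1) n) x) j)) i (n+1)
            = G.deg k (dProd (fun j => G.dsTo i n (G.gE x j)) i n) := by
          rw [my_dProd_split _ (show i ≤ k by omega) (show k ≤ n+1 by omega),
            my_dProd_split _ (show k ≤ k+1 by omega) (show k+1 ≤ n+1 by omega)]
          have h1 : dProd (fun j => G.dsTo i (n+1) (G.gE (G.wbarMap (σOH k (n+1) n) x) j)) k (k+1) = 1 := by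
            rw [my_dProd_single]; exact hBk
          have h2 : dProd (fun j => G.dsTo i (n+1) (G.gE (G.wbarMap (σOH k (n+1) n) x) j)) (k+1) (n+1) = dProd (fun j => G.deg k (G.dsTo i n (G.gE x j))) k n := by
            rw [my_dProd_shift]
            exact my_dProd_congr (fun j hj1 hj2 => hB2 j hj1 hj2)
          have h3 : dProd (fun j => G.dsTo i (n+1) (G.gE (G.wbarMap (σOH k (n+1) n) x) j)) i k = dProd (fun j => G.deg k (G.dsTo i n (G.gE x j))) i k :=
            my_dProd_congr (fun j hj1 hj2 => hB1 j hj1 (by omega))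
          rw [h1, h2, h3, mul_one,
            ← my_dProd_split (fun j => G.deg k (G.dsTo i n (G.gE x j))) (show i ≤ k by omega) (show k ≤ n by omega),
            my_dProd_hom (G.deg k) (G.my_deg_mul k) (G.my_deg_one k) (fun j => G.dsTo i n (G.gE x j)) i n]
        rw [EA, EB, ← G.my_deg_mul, ← unfoldY i]
      · -- i = k
        subst hik
        rw [unfold' i, if_neg (by omega), if_pos rfl]
        have hA2 : ∀ j', i ≤ j' → j' < n →
            G.ds i (j'+1) ((G.yAux (n+1) (G.gE (G.wbarMap (σOH i (n+1) n) x)) (n+1) (j'+1))⁻¹) = G.deg i (G.ds i j' ((G.yAux n (G.gE x) (n+1) j')⁻¹)) := by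
          intro j' h1 h2
          rw [ih (j'+1) (by omega) (by omega), if_neg (by omega), if_neg (by omega),
            Nat.add_sub_cancel, ← G.my_deg_inv,
            G.my_ds_deg i i (j'+1) hk (by omega) (by omega) (by omega),
            if_pos (by omega : i ≤ i), if_neg (by omega : ¬ j' + 1 ≤ i), Nat.add_sub_cancel]
        have hB2 : ∀ j', i ≤ j' → j' < n →
            G.dsTo i (n+1) (G.gE (G.wbarMap (σOH i (n+1) n) x) (j'+1)) = G.deg i (G.dsTo i n (G.gE x j')) := by
          intro j' h1 h2
          rw [F3 j' (by omega) h2,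
            G.my_dsTo_deg i i n (by omega) (by omega) (by omega) (by omega),
            if_pos (by omega : i ≤ i)]
        have hBk : G.dsTo i (n+1) (G.gE (G.wbarMap (σOH i (n+1) n) x) i) = 1 := by
          rw [F2, G.my_dsTo_one]
        have EA : aProd (fun j => G.ds i j ((G.yAux (n+1) (G.gE (G.wbarMap (σOH i (n+1) n) x)) (n+1) j)⁻¹)) (i+1) (n+1)
            = G.deg i (aProd (fun j => G.ds i j ((G.yAux n (G.gE x) (n+1) j)⁻¹)) i n) := by
          rw [my_aProd_shift]
          rw [show aProd (fun j => (fun j => G.ds i j ((G.yAux (n+1) (G.gE (G.wbarMap (σOH i (n+1) n) x)) (n+1) j)⁻¹)) (j+1)) i n = aProd (fun j => G.deg i (G.ds i j ((G.yAux n (G.gE x) (n+1) j)⁻¹))) i n from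
            my_aProd_congr (fun j hj1 hj2 => hA2 j hj1 hj2),
            my_aProd_hom (G.deg i) (G.my_deg_mul i) (G.my_deg_one i) (fun j => G.ds i j ((G.yAux n (G.gE x) (n+1) j)⁻¹)) i n]
        have EB : dProd (fun j => G.dsTo i (n+1) (G.gE (G.wbarMap (σOH i (n+1) n) x) j)) i (n+1)
            = G.deg i (dProd (fun j => G.dsTo i n (G.gE x j)) i n) := by
          rw [my_dProd_split _ (show i ≤ i+1 by omega) (show i+1 ≤ n+1 by omega)]
          have h1 : dProd (fun j => G.dsTo i (n+1) (G.gE (G.wbarMap (σOH i (n+1) n) x) j)) i (i+1) = 1 := by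
            rw [my_dProd_single]; exact hBk
          have h2 : dProd (fun j => G.dsTo i (n+1) (G.gE (G.wbarMap (σOH i (n+1) n) x) j)) (i+1) (n+1) = dProd (fun j => G.deg i (G.dsTo i n (G.gE x j))) i n := by
            rw [my_dProd_shift]
            exact my_dProd_congr (fun j hj1 hj2 => hB2 j hj1 hj2)
          rw [h1, h2, mul_one,
            my_dProd_hom (G.deg i) (G.my_deg_mul i) (G.my_deg_one i) (fun j => G.dsTo i n (G.gE x j)) i n]
        rw [EA, EB, ← G.my_deg_mul]
        have hsplit : aProd (fun j => G.ds i j ((G.yAux n (G.gE x) (n+1) j)⁻¹)) i n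
            = (G.yAux n (G.gE x) (n+1) i)⁻¹ * aProd (fun j => G.ds i j ((G.yAux n (G.gE x) (n+1) j)⁻¹)) (i+1) n := by
          rcases Nat.lt_or_ge i n with hin | hin
          · rw [my_aProd_split _ (show i ≤ i+1 by omega) (show i+1 ≤ n by omega)]
            have h1 : aProd (fun j => G.ds i j ((G.yAux n (G.gE x) (n+1) j)⁻¹)) i (i+1) = (G.yAux n (G.gE x) (n+1) i)⁻¹ := by
              rw [my_aProd_single]
              show G.ds i i ((G.yAux n (G.gE x) (n+1) i)⁻¹) = _
              rw [G.my_ds_refl]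
            rw [h1]
          · rw [my_aProd_of_le _ (by omega), my_aProd_of_le _ (by omega), ytop i (by omega),
              inv_one, mul_one]
        rw [hsplit, mul_assoc, ← unfoldY i, inv_mul_cancel, G.my_deg_one]
      · -- k < i
        rw [unfold' i, if_neg (by omega), if_neg (by omega)]
        obtain ⟨i', rfl⟩ : ∃ i', i = i' + 1 := ⟨i - 1, by omega⟩
        rw [Nat.add_sub_cancel]
        have hA2 : ∀ j', i' + 1 ≤ j' → j' < n →
            G.ds (i'+1) (j'+1) ((G.yAux (n+1) (G.gE (G.wbarMap (σOH k (n+1) n) x)) (n+1) (j'+1))⁻¹)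
              = G.deg k (G.ds i' j' ((G.yAux n (G.gE x) (n+1) j')⁻¹)) := by
          intro j' h1 h2
          rw [ih (j'+1) (by omega) (by omega), if_neg (by omega), if_neg (by omega),
            Nat.add_sub_cancel, ← G.my_deg_inv,
            G.my_ds_deg k (i'+1) (j'+1) hk (by omega) (by omega) (by omega),
            if_neg (by omega : ¬ i' + 1 ≤ k), if_neg (by omega : ¬ j' + 1 ≤ k)]
          rw [Nat.add_sub_cancel, Nat.add_sub_cancel]
        have hB2 : ∀ j', i' ≤ j' → j' < n →
            G.dsTo (i'+1) (n+1) (G.gE (G.wbarMap (σOH k (n+1) n) x) (j'+1)) = G.deg k (G.dsTo i' n (G.gE x j')) := by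
          intro j' h1 h2
          rw [F3 j' (by omega) h2,
            G.my_dsTo_deg k (i'+1) n (by omega) (by omega) (by omega) (by omega),
            if_neg (by omega : ¬ i' + 1 ≤ k), Nat.add_sub_cancel]
        have EA : aProd (fun j => G.ds (i'+1) j ((G.yAux (n+1) (G.gE (G.wbarMap (σOH k (n+1) n) x)) (n+1) j)⁻¹)) (i'+1+1) (n+1)
            = G.deg k (aProd (fun j => G.ds i' j ((G.yAux n (G.gE x) (n+1) j)⁻¹)) (i'+1) n) := by
          rw [my_aProd_shift]
          rw [show aProd (fun j => (fun j => G.ds (i'+1) j ((G.yAux (n+1) (G.gE (G.wbarMap (σOH k (n+1) n) x)) (n+1) j)⁻¹)) (j+1)) (i'+1) n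
              = aProd (fun j => G.deg k (G.ds i' j ((G.yAux n (G.gE x) (n+1) j)⁻¹))) (i'+1) n from
            my_aProd_congr (fun j hj1 hj2 => hA2 j hj1 hj2),
            my_aProd_hom (G.deg k) (G.my_deg_mul k) (G.my_deg_one k) (fun j => G.ds i' j ((G.yAux n (G.gE x) (n+1) j)⁻¹)) (i'+1) n]
        have EB : dProd (fun j => G.dsTo (i'+1) (n+1) (G.gE (G.wbarMap (σOH k (n+1) n) x) j)) (i'+1) (n+1)
            = G.deg k (dProd (fun j => G.dsTo i' n (G.gE x j)) i' n) := by
          rw [my_dProd_shift]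
          rw [show dProd (fun j => (fun j => G.dsTo (i'+1) (n+1) (G.gE (G.wbarMap (σOH k (n+1) n) x) j)) (j+1)) i' n
              = dProd (fun j => G.deg k (G.dsTo i' n (G.gE x j))) i' n from
            my_dProd_congr (fun j hj1 hj2 => hB2 j hj1 hj2),
            my_dProd_hom (G.deg k) (G.my_deg_mul k) (G.my_deg_one k) (fun j => G.dsTo i' n (G.gE x j)) i' n]
        rw [EA, EB, ← G.my_deg_mul, ← unfoldY i']
  funext i
  have hi := i.isLt
  show G.yAux (n+1) (G.gE (G.wbarMap (σOH k (n+1) n) x)) (n+1) (i : ℕ) = _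
  rw [key (n+1) (i : ℕ) (by omega) (by omega)]
  simp only [SGrp.diagMap]
  have hxE : ∀ j : ℕ, j < n → G.xE (G.SGn n x) j = G.yAux n (G.gE x) (n+1) j := by
    intro j h
    simp only [SGrp.xE]
    rw [dif_pos h]
    show G.yAux n (G.gE x) n j = _
    rw [G.my_yAux_eq n _ n (n+1) j (by omega) (by omega)]
  rcases Nat.lt_trichotomy (i : ℕ) k with h | h | h
  · rw [if_pos h,
      show (((σOH k (n+1) n) i.castSucc : Fin (n+1)) : ℕ) = (i : ℕ) by
        rw [hσval]; simp only [Fin.coe_castSucc]; split_ifs <;> omega,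
      show (((σOH k (n+1) n) i.succ : Fin (n+1)) : ℕ) = (i : ℕ) + 1 by
        rw [hσval]; simp only [Fin.val_succ]; split_ifs <;> omega]
    refine Eq.trans ?_ (my_dProd_single _ _).symm
    show G.deg k _ = G.map (σOH k (n+1) n) (G.xE (G.SGn n x) (i : ℕ))
    rw [hxE (i : ℕ) (by omega)]
    rfl
  · rw [if_neg (by omega), if_pos h,
      show (((σOH k (n+1) n) i.castSucc : Fin (n+1)) : ℕ) = k by
        rw [hσval]; simp only [Fin.coe_castSucc]; split_ifs <;> omega,
      show (((σOH k (n+1) n) i.succ : Fin (n+1)) : ℕ) = k by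
        rw [hσval]; simp only [Fin.val_succ]; split_ifs <;> omega,
      my_dProd_of_le _ (le_refl k)]
  · rw [if_neg (by omega), if_neg (by omega),
      show (((σOH k (n+1) n) i.castSucc : Fin (n+1)) : ℕ) = (i : ℕ) - 1 by
        rw [hσval]; simp only [Fin.coe_castSucc]; split_ifs <;> omega,
      show (((σOH k (n+1) n) i.succ : Fin (n+1)) : ℕ) = ((i : ℕ) - 1) + 1 by
        rw [hσval]; simp only [Fin.val_succ]; split_ifs <;> omega]
    refine Eq.trans ?_ (my_dProd_single _ _).symm
    show G.deg k _ = G.map (σOH k (n+1) n) (G.xE (G.SGn n x) ((i : ℕ) - 1))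
    rw [hxE ((i : ℕ) - 1) (by omega)]
    rfl
end
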